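/- Let M be an n×n real matrix each of whose columns sums to zero, let δ be a diagonal n×n real matrix with positive diagonal entries δ₁, …, δₙ, let λ > 0 and κ ≥ 0, and let I, R : [0, ∞) → ℝ^n be functions with R differentiable, satisfying R'(t) = δ·I(t) + M·R(t) for all t ≥ 0, with I(t) entrywise nonnegative and I_n(t) ≤ κ·exp(−λt) for every coordinate n and t ≥ 0, and such that R(t) converges to a limit R(∞) as t → ∞. Then each I_n is integrable on [0, ∞), Σ_n R_n(∞) = Σ_n R_n(0) + Σ_n δ_n·∫₀^∞ I_n(t) dt, and consequently Σ_n R_n(∞) ≤ Σ_n R_n(0) + (κ/λ)·Σ_n δ_n. -/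

import Mathlib

open Matrix MeasureTheory Filter

set_option maxHeartbeats 1000000

/-- final size bookkeeping: with `R' = δ I + M R`, `I ≥ 0` decaying
exponentially, and `R(t) → R(∞)`, each `Iₙ` is integrable on `[0, ∞)`,
`Σₙ Rₙ(∞) = Σₙ Rₙ(0) + Σₙ δₙ ∫₀^∞ Iₙ`, and `Σₙ Rₙ(∞) ≤ Σₙ Rₙ(0) + (κ/λ) Σₙ δₙ`. -/
theorem final_size_estimate {n : Type*} [Fintype n] [DecidableEq n]
    (M : Matrix n n ℝ) (hcol : ∀ j, ∑ i, M i j = 0)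
    (δv : n → ℝ) (hδ : ∀ i, 0 < δv i)
    (lam κ : ℝ) (hlam : 0 < lam) (hκ : 0 ≤ κ)
    (I R : ℝ → n → ℝ)
    (hR : ∀ t : ℝ, 0 ≤ t →
      HasDerivAt R ((Matrix.diagonal δv).mulVec (I t) + M.mulVec (R t)) t)
    (hI0 : ∀ t : ℝ, 0 ≤ t → ∀ i, 0 ≤ I t i)
    (hIb : ∀ t : ℝ, 0 ≤ t → ∀ i, I t i ≤ κ * Real.exp (-lam * t))
    (Rinf : n → ℝ) (hconv : Tendsto R atTop (nhds Rinf)) :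
    (∀ i, IntegrableOn (fun t => I t i) (Set.Ici (0:ℝ))) ∧
    (∑ i, Rinf i = ∑ i, R 0 i + ∑ i, δv i * ∫ t in Set.Ici (0:ℝ), I t i) ∧
    ∑ i, Rinf i ≤ ∑ i, R 0 i + κ / lam * ∑ i, δv i := by
  -- R is continuous on Ici 0
  have hRcont : ContinuousOn R (Set.Ici (0:ℝ)) := fun t ht =>
    (hR t ht).continuousAt.continuousWithinAt
  -- I agrees with a measurable function on Ici 0
  have hIeq : ∀ t ∈ Set.Ici (0:ℝ), ∀ i,
      I t i = (deriv R t i - M.mulVec (R t) i) * (δv i)⁻¹ := by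
    intro t ht i
    have hd := (hR t ht).deriv
    have : deriv R t i = δv i * I t i + M.mulVec (R t) i := by
      rw [hd]; simp [Matrix.mulVec_diagonal]
    rw [this]
    rw [add_sub_cancel_right, mul_comm (δv i), mul_assoc, mul_inv_cancel₀ (hδ i).ne', mul_one]
  have hmeas : ∀ i, AEStronglyMeasurable (fun t => I t i)
      (volume.restrict (Set.Ici (0:ℝ))) := by
    intro i
    have h1 : Measurable (fun t => deriv R t i) :=
      (measurable_pi_apply i).comp (measurable_deriv R)
    have h2 : AEStronglyMeasurable (fun t => M.mulVec (R t) i)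
        (volume.restrict (Set.Ici (0:ℝ))) := by
      have : ContinuousOn (fun t => M.mulVec (R t) i) (Set.Ici (0:ℝ)) := by
        apply continuousOn_finset_sum
        intro j _
        exact (continuousOn_const.mul ((continuous_apply j).comp_continuousOn hRcont))
      exact this.aestronglyMeasurable measurableSet_Ici
    have h3 : AEStronglyMeasurable
        (fun t => (deriv R t i - M.mulVec (R t) i) * (δv i)⁻¹)
        (volume.restrict (Set.Ici (0:ℝ))) :=
      (((h1.aestronglyMeasurable.sub h2)).mul aestronglyMeasurable_const)
    refine h3.congr ?_
    filter_upwards [ae_restrict_mem measurableSet_Ici] with t ht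
    exact (hIeq t ht i).symm
  -- integrability
  have hint : ∀ i, IntegrableOn (fun t => I t i) (Set.Ici (0:ℝ)) := by
    intro i
    have hexp : IntegrableOn (fun t => κ * Real.exp (-lam * t)) (Set.Ici (0:ℝ)) := by
      rw [integrableOn_Ici_iff_integrableOn_Ioi]
      exact (exp_neg_integrableOn_Ioi 0 hlam).const_mul κ
    refine Integrable.mono' hexp (hmeas i) ?_
    filter_upwards [ae_restrict_mem measurableSet_Ici] with t ht
    rw [Real.norm_eq_abs, abs_of_nonneg (hI0 t ht i)]
    exact hIb t ht i
  refine ⟨hint, ?_⟩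
  -- the sum S t = ∑ R t i has derivative f t = ∑ δv i * I t i
  set f : ℝ → ℝ := fun t => ∑ i, δv i * I t i with hf
  have hS : ∀ t ∈ Set.Ici (0:ℝ), HasDerivAt (fun t => ∑ i, R t i) (f t) t := by
    intro t ht
    have h := hR t ht
    have hc : ∀ i, HasDerivAt (fun t => R t i)
        (((Matrix.diagonal δv).mulVec (I t) + M.mulVec (R t)) i) t :=
      hasDerivAt_pi.1 h
    have hsum : HasDerivAt (fun t => ∑ i, R t i)
        (∑ i, ((Matrix.diagonal δv).mulVec (I t) + M.mulVec (R t)) i) t :=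
      HasDerivAt.fun_sum fun i _ => hc i
    convert hsum using 1
    have hM : ∑ i, M.mulVec (R t) i = 0 := by
      simp only [Matrix.mulVec, dotProduct]
      rw [Finset.sum_comm]
      simp [← Finset.sum_mul, hcol]
    simp [Pi.add_apply, Finset.sum_add_distrib, Matrix.mulVec_diagonal, hM, hf]
  have hfint : IntegrableOn f (Set.Ioi (0:ℝ)) := by
    apply Integrable.mono' (g := fun t => ∑ i, δv i * (κ * Real.exp (-lam * t)))
    · apply integrable_finset_sum
      intro i _
      exact ((exp_neg_integrableOn_Ioi 0 hlam).const_mul κ).const_mul (δv i)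
    · apply Finset.aestronglyMeasurable_fun_sum
      intro i _
      exact (((hmeas i).mono_measure
        (Measure.restrict_mono Set.Ioi_subset_Ici_self le_rfl)).const_mul (δv i))
    · filter_upwards [ae_restrict_mem measurableSet_Ioi] with t ht
      rw [Real.norm_eq_abs, abs_of_nonneg]
      · exact Finset.sum_le_sum fun i _ =>
          mul_le_mul_of_nonneg_left (hIb t ht.le i) (hδ i).le
      · exact Finset.sum_nonneg fun i _ =>
          mul_nonneg (hδ i).le (hI0 t ht.le i)
  have hStend : Tendsto (fun t => ∑ i, R t i) atTop (nhds (∑ i, Rinf i)) := by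
    apply tendsto_finset_sum
    intro i _
    exact (continuous_apply i).continuousAt.tendsto.comp hconv
  have hFTC := integral_Ioi_of_hasDerivAt_of_tendsto' hS hfint hStend
  have hIci : ∀ (g : ℝ → ℝ), ∫ t in Set.Ici (0:ℝ), g t = ∫ t in Set.Ioi (0:ℝ), g t :=
    fun g => integral_Ici_eq_integral_Ioi
  have hsplit : ∫ t in Set.Ioi (0:ℝ), f t = ∑ i, δv i * ∫ t in Set.Ici (0:ℝ), I t i := by
    rw [integral_finset_sum]
    · refine Finset.sum_congr rfl fun i _ => ?_
      rw [integral_const_mul, hIci]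
    · exact fun i _ => ((hint i).mono_set Set.Ioi_subset_Ici_self).const_mul (δv i)
  have hmain : ∑ i, Rinf i = ∑ i, R 0 i + ∑ i, δv i * ∫ t in Set.Ici (0:ℝ), I t i := by
    rw [← hsplit, hFTC]; ring
  refine ⟨hmain, ?_⟩
  rw [hmain]
  gcongr ?_ + ?_
  · exact le_rfl
  have hIbound : ∀ i, ∫ t in Set.Ici (0:ℝ), I t i ≤ κ / lam := by
    intro i
    have hexp : IntegrableOn (fun t => κ * Real.exp (-lam * t)) (Set.Ici (0:ℝ)) := by
      rw [integrableOn_Ici_iff_integrableOn_Ioi]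
      exact (exp_neg_integrableOn_Ioi 0 hlam).const_mul κ
    have h1 : ∫ t in Set.Ici (0:ℝ), I t i ≤ ∫ t in Set.Ici (0:ℝ), κ * Real.exp (-lam * t) :=
      setIntegral_mono_on (hint i) hexp measurableSet_Ici fun t ht => hIb t ht i
    have h2 : ∫ t in Set.Ici (0:ℝ), κ * Real.exp (-lam * t) = κ / lam := by
      rw [hIci, integral_const_mul]
      have heq : ∀ t : ℝ, Real.exp (-lam * t) = Real.exp (-(lam * t)) := fun t => by ring_nf
      simp_rw [heq]
      rw [show (fun t : ℝ => Real.exp (-(lam * t))) = fun t : ℝ => Real.exp (-(lam * t)) from rfl]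
      have := integral_comp_mul_left_Ioi (fun x => Real.exp (-x)) 0 hlam
      simp only [mul_zero, smul_eq_mul] at this
      rw [this, integral_exp_neg_Ioi_zero, mul_one, div_eq_mul_inv]
    linarith [h1, h2]
  calc κ / lam * ∑ i, δv i = ∑ i, δv i * (κ / lam) := by rw [Finset.mul_sum]; congr 1; ext i; ring
    _ ≥ ∑ i, δv i * ∫ t in Set.Ici (0:ℝ), I t i :=
        Finset.sum_le_sum fun i _ => mul_le_mul_of_nonneg_left (hIbound i) (hδ i).le
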